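/- The Willmore energy of the Willmore torus, obtained by rotating around the z-axis the circle in the xz-plane of center (√2, 0, 0) and radius 1, equals 2π². -/

import Mathlib

open Real intervalIntegral

lemma one_lt_sqrt2 : (1:ℝ) < Real.sqrt 2 := by
  nlinarith [Real.sq_sqrt (show (0:ℝ) ≤ 2 by norm_num), Real.sqrt_nonneg 2,
    sq_nonneg (Real.sqrt 2 - 1)]

lemma sqrt2_pos_add (θ : ℝ) : 0 < Real.sqrt 2 + Real.cos θ := by
  nlinarith [one_lt_sqrt2, Real.neg_one_le_cos θ]

lemma sqrt2_pos_add' (θ : ℝ) : 0 < Real.sqrt 2 + 1 + Real.cos θ := by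
  nlinarith [one_lt_sqrt2, Real.neg_one_le_cos θ]

lemma aux_alg (a c s : ℝ) (ha : a * a = 2) (hs : s ^ 2 = 1 - c ^ 2)
    (hx : 0 < a + c) (hx' : 0 < a + 1 + c) (ha1 : 0 < a + 1) :
    ((a + 2 * c) / (2 * (a + c))) ^ 2 * (a + c)
      = c + 1 / 2 - 1 / (1 + (s / (a + 1 + c)) ^ 2)
          * ((c * (a + 1 + c) - s * -s) / (a + 1 + c) ^ 2) := by
  have hsu : s * -s = -(1 - c ^ 2) := by linear_combination -hs
  have hsq : (s / (a + 1 + c)) ^ 2 = (1 - c ^ 2) / (a + 1 + c) ^ 2 := by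
    rw [div_pow, hs]
  rw [hsu, hsq, sub_neg_eq_add]
  have e1 : 1 + (1 - c ^ 2) / (a + 1 + c) ^ 2
      = (2 * (a + 1) * (a + c)) / ((a + 1 + c) ^ 2) := by
    field_simp
    linear_combination -ha
  rw [e1]
  have h2 : (0:ℝ) < 2 * (a + 1) * (a + c) := by positivity
  field_simp
  linear_combination (a - 1) * ha

lemma hasDeriv (θ : ℝ) :
    HasDerivAt (fun t : ℝ => Real.sin t + t / 2 -
        Real.arctan (Real.sin t / (Real.sqrt 2 + 1 + Real.cos t)))
      (((Real.sqrt 2 + 2 * Real.cos θ) / (2 * (Real.sqrt 2 + Real.cos θ))) ^ 2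
          * (Real.sqrt 2 + Real.cos θ)) θ := by
  have hv : Real.sqrt 2 + 1 + Real.cos θ ≠ 0 := (sqrt2_pos_add' θ).ne'
  have h1 : HasDerivAt Real.sin (Real.cos θ) θ := Real.hasDerivAt_sin θ
  have h2 : HasDerivAt (fun t : ℝ => t / 2) (1 / 2) θ := by
    simpa using (hasDerivAt_id θ).div_const 2
  have hden : HasDerivAt (fun t : ℝ => Real.sqrt 2 + 1 + Real.cos t) (-Real.sin θ) θ := by
    simpa using ((Real.hasDerivAt_cos θ).const_add (Real.sqrt 2 + 1))
  have hq : HasDerivAt (fun t : ℝ => Real.sin t / (Real.sqrt 2 + 1 + Real.cos t))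
      ((Real.cos θ * (Real.sqrt 2 + 1 + Real.cos θ) - Real.sin θ * (-Real.sin θ)) /
        (Real.sqrt 2 + 1 + Real.cos θ) ^ 2) θ := h1.div hden hv
  have h := (h1.add h2).sub hq.arctan
  refine h.congr_deriv ?_
  exact (aux_alg (Real.sqrt 2) (Real.cos θ) (Real.sin θ)
    (Real.mul_self_sqrt (by norm_num)) (Real.sin_sq θ)
    (sqrt2_pos_add θ) (sqrt2_pos_add' θ) (by nlinarith [one_lt_sqrt2])).symm

lemma inner_int :
    (∫ θ in (0:ℝ)..(2 * Real.pi),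
        ((Real.sqrt 2 + 2 * Real.cos θ) / (2 * (Real.sqrt 2 + Real.cos θ))) ^ 2
          * (Real.sqrt 2 + Real.cos θ)) = Real.pi := by
  have hcont : Continuous fun θ : ℝ =>
      ((Real.sqrt 2 + 2 * Real.cos θ) / (2 * (Real.sqrt 2 + Real.cos θ))) ^ 2
        * (Real.sqrt 2 + Real.cos θ) := by
    apply Continuous.mul _ (by continuity)
    apply Continuous.pow
    apply Continuous.div (by continuity) (by continuity)
    intro θ
    have := sqrt2_pos_add θ
    positivity
  rw [intervalIntegral.integral_eq_sub_of_hasDerivAt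
    (fun θ _ => hasDeriv θ) (hcont.intervalIntegrable 0 (2 * Real.pi))]
  simp [Real.sin_two_pi, Real.cos_two_pi, Real.arctan_zero]

/-- The Willmore energy of the Willmore torus (the torus of revolution with `R = √2`,
`r = 1`): `W = ∫₀^{2π}∫₀^{2π} H(θ)² (√2 + cos θ) dθ dφ` with
`H(θ) = (√2 + 2 cos θ)/(2(√2 + cos θ))` equals `2π²`. -/
theorem stmt_2 :
    (∫ φ in (0:ℝ)..(2 * Real.pi), ∫ θ in (0:ℝ)..(2 * Real.pi),
        ((Real.sqrt 2 + 2 * Real.cos θ) / (2 * (Real.sqrt 2 + Real.cos θ))) ^ 2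
          * (Real.sqrt 2 + Real.cos θ))
      = 2 * Real.pi ^ 2 := by
  simp only [inner_int]
  simp
  ring
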